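/- arXiv:2511.04368 — 2 statements merged into one kernel-verified Lean document; each statement's English description precedes it below -/
import Mathlib

section
/- Suppose C₁, C₂ ∈ ℂ are such that the polynomial p(σ) = (σ − i|ξ|)(σ + i|ξ|)(C₁ n + C₂ σ τ) (a polynomial in σ with values in ℂ²) is divisible, componentwise, by (σ − i|ξ|)², where ξ ∈ ℝ² is nonzero and n, τ is an orthonormal basis of ℝ². Then C₁ = C₂ = 0. -/
open Complex Polynomial

/-- If each component of the ℂ²-valued polynomial
`σ ↦ (σ − i|ξ|)(σ + i|ξ|)(C₁ n + C₂ σ τ)` is divisible by `(σ − i|ξ|)²`, then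
`C₁ = C₂ = 0`. -/
theorem complementing_condition_divisibility
    (ξ n τ : EuclideanSpace ℝ (Fin 2))
    (hξ : ξ ≠ 0)
    (hn : ‖n‖ = 1) (hτ : ‖τ‖ = 1) (hnτ : (inner ℝ n τ : ℝ) = 0)
    (C₁ C₂ : ℂ)
    (h : ∀ j : Fin 2,
      ((X - C (Complex.I * (‖ξ‖ : ℝ))) ^ 2 : ℂ[X]) ∣
        (X - C (Complex.I * (‖ξ‖ : ℝ))) * (X + C (Complex.I * (‖ξ‖ : ℝ))) *
          (C (C₁ * (n j : ℂ)) + C (C₂ * (τ j : ℂ)) * X)) :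
    C₁ = 0 ∧ C₂ = 0 := by
  set a : ℂ := Complex.I * (‖ξ‖ : ℝ) with ha
  have ha0 : a ≠ 0 := by
    simp [ha, Complex.I_ne_zero, norm_eq_zero, hξ]
  -- cancel one factor
  have key : ∀ j : Fin 2, C₁ * (n j : ℂ) + C₂ * (τ j : ℂ) * a = 0 := by
    intro j
    have hd := h j
    rw [sq, mul_assoc] at hd
    have hX : (X - C a : ℂ[X]) ≠ 0 := X_sub_C_ne_zero a
    have hd2 : (X - C a : ℂ[X]) ∣ (X + C a) * (C (C₁ * (n j : ℂ)) + C (C₂ * (τ j : ℂ)) * X) :=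
      (mul_dvd_mul_iff_left hX).mp hd
    have hr := (dvd_iff_isRoot).mp hd2
    simp only [IsRoot, eval_mul, eval_add, eval_X, eval_C] at hr
    have h2a : a + a ≠ 0 := by
      intro hc
      apply ha0
      have : (2 : ℂ) * a = 0 := by ring_nf; linear_combination hc
      simpa using (mul_eq_zero.mp this).resolve_left (by norm_num)
    rcases mul_eq_zero.mp hr with h1 | h1
    · exact absurd h1 h2a
    · exact h1
  -- orthonormality facts
  have hn2 : (n 0 : ℝ)^2 + (n 1)^2 = 1 := by
    have := real_inner_self_eq_norm_sq n
    rw [hn] at this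
    simp [EuclideanSpace.inner_eq_star_dotProduct] at this
    have hi : (inner ℝ n n : ℝ) = n 0 * n 0 + n 1 * n 1 := by
      rw [PiLp.inner_apply]; simp [Fin.sum_univ_two]; ring
    nlinarith [real_inner_self_eq_norm_sq n]
  have hτ2 : (τ 0 : ℝ)^2 + (τ 1)^2 = 1 := by
    have hi : (inner ℝ τ τ : ℝ) = τ 0 * τ 0 + τ 1 * τ 1 := by
      rw [PiLp.inner_apply]; simp [Fin.sum_univ_two]; ring
    nlinarith [real_inner_self_eq_norm_sq τ]
  have hnt : (n 0 : ℝ) * τ 0 + n 1 * τ 1 = 0 := by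
    have hi : (inner ℝ n τ : ℝ) = n 0 * τ 0 + n 1 * τ 1 := by
      rw [PiLp.inner_apply]; simp [Fin.sum_univ_two]; ring
    linarith [hi ▸ hnτ]
  have k0 := key 0
  have k1 := key 1
  have hn2' : (((n 0 : ℝ) : ℂ))^2 + (((n 1 : ℝ) : ℂ))^2 = 1 := by
    have hc := congrArg (Complex.ofReal) hn2; push_cast at hc; linear_combination hc
  have hτ2' : (((τ 0 : ℝ) : ℂ))^2 + (((τ 1 : ℝ) : ℂ))^2 = 1 := by
    have hc := congrArg (Complex.ofReal) hτ2; push_cast at hc; linear_combination hc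
  have hnt' : (((n 0 : ℝ) : ℂ)) * ((τ 0 : ℝ) : ℂ) + ((n 1 : ℝ) : ℂ) * ((τ 1 : ℝ) : ℂ) = 0 := by
    have hc := congrArg (Complex.ofReal) hnt; push_cast at hc; linear_combination hc
  have hC1 : C₁ = 0 := by
    linear_combination (n 0 : ℂ) * k0 + (n 1 : ℂ) * k1 - C₁ * hn2' - C₂ * a * hnt'
  have hC2a : C₂ * a = 0 := by
    linear_combination (τ 0 : ℂ) * k0 + (τ 1 : ℂ) * k1 - C₁ * hnt' - C₂ * a * hτ2'
  exact ⟨hC1, (mul_eq_zero.mp hC2a).resolve_right ha0⟩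
end

section
/- Let v be a C¹ vector field along the boundary of a planar domain with unit normal n, unit tangent τ, curvature κ satisfying ∂_τ n = κτ, and suppose v·n = 0 on the boundary and the Navier condition 2(Dv)_S n·τ + α v·τ = 0 holds for some function α. Then ((n·∇)v)·τ + (α − κ)(v·τ) = 0 on the boundary. -/
open Matrix

/-- Reformulation of the Navier slip condition: if `v·n = 0` and
`2(Dv)_S n·τ + α v·τ = 0` along the boundary curve, with `∂_τ n = κτ`, then
`((n·∇)v)·τ + (α − κ)(v·τ) = 0` along the curve. -/
theorem navier_boundary_reformulation
    (v n τ : (Fin 2 → ℝ) → (Fin 2 → ℝ))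
    (κ α : (Fin 2 → ℝ) → ℝ)
    (hv : ContDiff ℝ 1 v) (hn : ContDiff ℝ 1 n)
    (J : (Fin 2 → ℝ) → Matrix (Fin 2) (Fin 2) ℝ)
    (hJ : ∀ x, J x = Matrix.of fun i j => fderiv ℝ v x (Pi.single j 1) i)
    (γ : ℝ → Fin 2 → ℝ)
    (hγ : ∀ t : ℝ, HasDerivAt γ (τ (γ t)) t)
    (hunit_n : ∀ t : ℝ, n (γ t) ⬝ᵥ n (γ t) = 1)
    (hunit_τ : ∀ t : ℝ, τ (γ t) ⬝ᵥ τ (γ t) = 1)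
    (horth : ∀ t : ℝ, n (γ t) ⬝ᵥ τ (γ t) = 0)
    (hfrenet : ∀ t : ℝ, fderiv ℝ n (γ t) (τ (γ t)) = κ (γ t) • τ (γ t))
    (htangent : ∀ t : ℝ, v (γ t) ⬝ᵥ n (γ t) = 0)
    (hnavier : ∀ t : ℝ,
      (J (γ t) + (J (γ t))ᵀ).mulVec (n (γ t)) ⬝ᵥ τ (γ t) +
        α (γ t) * (v (γ t) ⬝ᵥ τ (γ t)) = 0) :
    ∀ t : ℝ,
      (J (γ t)).mulVec (n (γ t)) ⬝ᵥ τ (γ t) +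
        (α (γ t) - κ (γ t)) * (v (γ t) ⬝ᵥ τ (γ t)) = 0 := by
  intro t
  have hJv : ∀ w, (J (γ t)).mulVec w = fderiv ℝ v (γ t) w := by
    intro w
    funext i
    have hw : w = ∑ j, w j • (Pi.single j 1 : Fin 2 → ℝ) := by
      funext i
      simp [Finset.sum_apply, Pi.single_apply]
    conv_rhs => rw [hw]
    rw [map_sum]
    simp [hJ, Matrix.mulVec, dotProduct, Finset.sum_apply, mul_comm]
  -- derivative of v ∘ γ and n ∘ γ
  have hvγ : HasDerivAt (fun s => v (γ s)) (fderiv ℝ v (γ t) (τ (γ t))) t := by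
    simpa [Function.comp_def] using ((hv.differentiable one_ne_zero (γ t)).hasFDerivAt).comp_hasDerivAt t (hγ t)
  have hnγ : HasDerivAt (fun s => n (γ s)) (fderiv ℝ n (γ t) (τ (γ t))) t := by
    simpa [Function.comp_def] using ((hn.differentiable one_ne_zero (γ t)).hasFDerivAt).comp_hasDerivAt t (hγ t)
  have hvγi : ∀ i : Fin 2, HasDerivAt (fun s => v (γ s) i)
      (fderiv ℝ v (γ t) (τ (γ t)) i) t := by
    intro i
    simpa [Function.comp_def] using
      ((ContinuousLinearMap.proj (R := ℝ) (φ := fun _ : Fin 2 => ℝ) i).hasFDerivAt).comp_hasDerivAt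
        t hvγ
  have hnγi : ∀ i : Fin 2, HasDerivAt (fun s => n (γ s) i)
      (fderiv ℝ n (γ t) (τ (γ t)) i) t := by
    intro i
    simpa [Function.comp_def] using
      ((ContinuousLinearMap.proj (R := ℝ) (φ := fun _ : Fin 2 => ℝ) i).hasFDerivAt).comp_hasDerivAt
        t hnγ
  have hsum : HasDerivAt (fun s => ∑ i : Fin 2, v (γ s) i * n (γ s) i)
      (∑ i : Fin 2, (fderiv ℝ v (γ t) (τ (γ t)) i * n (γ t) i +
        v (γ t) i * fderiv ℝ n (γ t) (τ (γ t)) i)) t :=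
    HasDerivAt.fun_sum fun i _ => (hvγi i).mul (hnγi i)
  have hzero : HasDerivAt (fun s => ∑ i : Fin 2, v (γ s) i * n (γ s) i) 0 t := by
    have hfun : (fun s => ∑ i : Fin 2, v (γ s) i * n (γ s) i) = fun _ => (0:ℝ) := by
      funext s
      simpa [dotProduct] using htangent s
    rw [hfun]
    exact hasDerivAt_const t 0
  have hkey : ∑ i : Fin 2, (fderiv ℝ v (γ t) (τ (γ t)) i * n (γ t) i +
      v (γ t) i * fderiv ℝ n (γ t) (τ (γ t)) i) = 0 := hsum.unique hzero
  rw [Finset.sum_add_distrib] at hkey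
  have h1 : ((J (γ t))ᵀ).mulVec (n (γ t)) ⬝ᵥ τ (γ t)
      = ∑ i : Fin 2, fderiv ℝ v (γ t) (τ (γ t)) i * n (γ t) i := by
    rw [Matrix.mulVec_transpose, ← Matrix.dotProduct_mulVec, hJv]
    simp [dotProduct, mul_comm]
  have h2 : ∑ i : Fin 2, v (γ t) i * fderiv ℝ n (γ t) (τ (γ t)) i
      = κ (γ t) * (v (γ t) ⬝ᵥ τ (γ t)) := by
    rw [hfrenet t]
    simp [dotProduct, Finset.mul_sum]
    ring
  rw [← h1, h2] at hkey
  have hN := hnavier t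
  rw [Matrix.add_mulVec, add_dotProduct] at hN
  linarith
end
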